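/- Let B be a unital C*-algebra, let 𝒜 ⊆ B be a unital C*-subalgebra, and let J ⊆ 𝒜 be a closed two-sided ideal of 𝒜. Let F, F' ∈ 𝒜 satisfy F − F* ∈ J, F² − 1 ∈ J, F' − F'* ∈ J, F'² − 1 ∈ J. Suppose FF' + F'F = P + K, where P ∈ 𝒜 is self-adjoint with P ≥ λ·1 in B for some real λ > −2, and K ∈ J. Then: (i) for every t ∈ [0, π/2] the element 1 + sin(t)cos(t)·P is positive and invertible in B, and its inverse square root lies in 𝒜; (ii) the elements G_t := (1 + sin(t)cos(t)·P)^{−1/2}·(cos(t)·F + sin(t)·F') belong to 𝒜 and satisfy G_t − G_t* ∈ J and G_t² − 1 ∈ J for every t ∈ [0, π/2]; (iii) the map t ↦ G_t is norm-continuous with G_0 = F and G_{π/2} = F'. In particular, F and F' are joined, within 𝒜 and modulo J, by the norm-continuous path (G_t). -/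

import Mathlib

open Polynomial in
lemma cfc_mem_closed_subalgebra {B : Type*} [CStarAlgebra B]
    (S : Subalgebra ℝ B) (hS : IsClosed (S : Set B))
    (a : B) (ha : IsSelfAdjoint a) (haS : a ∈ S)
    (f : ℝ → ℝ) (hf : ContinuousOn f (spectrum ℝ a)) :
    cfc f a ∈ S := by
  rw [cfc_apply f a ha hf]
  suffices h : ∀ g : C(spectrum ℝ a, ℝ), cfcHom ha g ∈ S from h _
  intro g
  have hT : polynomialFunctions (spectrum ℝ a)
      ≤ Subalgebra.comap (cfcHom ha (R := ℝ)).toAlgHom S := by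
    rw [polynomialFunctions.eq_adjoin_X, Algebra.adjoin_le_iff, Set.singleton_subset_iff]
    rw [SetLike.mem_coe, Subalgebra.mem_comap]
    have hXid : (toContinuousMapOnAlgHom (spectrum ℝ a) (X : ℝ[X]))
        = (ContinuousMap.id ℝ).restrict (spectrum ℝ a) := by
      ext x; simp
    show cfcHom ha _ ∈ S
    rw [hXid, cfcHom_id ha]
    exact haS
  have hclosed : IsClosed ((Subalgebra.comap (cfcHom ha (R := ℝ)).toAlgHom S
      : Subalgebra ℝ C(spectrum ℝ a, ℝ)) : Set C(spectrum ℝ a, ℝ)) := by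
    have : ((Subalgebra.comap (cfcHom ha (R := ℝ)).toAlgHom S) : Set C(spectrum ℝ a, ℝ))
        = ⇑(cfcHom ha (R := ℝ)) ⁻¹' (S : Set B) := rfl
    rw [this]
    exact hS.preimage (cfcHom_isClosedEmbedding ha).continuous
  have htop : (⊤ : Subalgebra ℝ C(spectrum ℝ a, ℝ))
      ≤ Subalgebra.comap (cfcHom ha (R := ℝ)).toAlgHom S := by
    rw [← polynomialFunctions.topologicalClosure (spectrum ℝ a)]
    exact Subalgebra.topologicalClosure_minimal hT hclosed
  exact (Subalgebra.mem_comap _ _ _).mp (htop Algebra.mem_top)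


/-- **Lemma 2.12 (Skandalis's Lemma 11), C*-algebraic content.** Let `B` be a unital
C*-algebra, `𝒜 ⊆ B` a closed unital *-subalgebra and `J ⊆ 𝒜` a closed two-sided ideal of `𝒜`.
If `F, F' ∈ 𝒜` are self-adjoint and involutive modulo `J`, and `F*F' + F'*F = P + K` with
`P ∈ 𝒜` self-adjoint, `P ≥ λ·1` for some `λ > -2`, and `K ∈ J`, then the path
`G_t = (1 + sin t cos t • P)^{-1/2} (cos t • F + sin t • F')` stays in `𝒜`, is self-adjoint
and involutive modulo `J`, is norm-continuous, and joins `F` to `F'`. -/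
theorem skandalis_CS_path
    {B : Type*} [CStarAlgebra B] [PartialOrder B] [StarOrderedRing B]
    (𝒜 : StarSubalgebra ℂ B) (h𝒜 : IsClosed (𝒜 : Set B))
    (J : Set B) (hJsub : J ⊆ (𝒜 : Set B)) (hJclosed : IsClosed J)
    (hJ0 : (0 : B) ∈ J) (hJadd : ∀ x ∈ J, ∀ y ∈ J, x + y ∈ J)
    (hJneg : ∀ x ∈ J, -x ∈ J)
    (hJmul_left : ∀ a ∈ 𝒜, ∀ x ∈ J, a * x ∈ J)
    (hJmul_right : ∀ a ∈ 𝒜, ∀ x ∈ J, x * a ∈ J)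
    (F F' P K : B) (hF𝒜 : F ∈ 𝒜) (hF'𝒜 : F' ∈ 𝒜)
    (hFstar : F - star F ∈ J) (hF2 : F ^ 2 - 1 ∈ J)
    (hF'star : F' - star F' ∈ J) (hF'2 : F' ^ 2 - 1 ∈ J)
    (hP𝒜 : P ∈ 𝒜) (hPsa : IsSelfAdjoint P)
    (lam : ℝ) (hlam : -2 < lam) (hPlower : lam • (1 : B) ≤ P)
    (hK : K ∈ J) (hdecomp : F * F' + F' * F = P + K)
    (G : ℝ → B)
    (hG : G = fun t =>
      cfc (fun x : ℝ => (Real.sqrt x)⁻¹) (1 + (Real.sin t * Real.cos t) • P) *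
        (Real.cos t • F + Real.sin t • F')) :
    -- (i) positivity, invertibility, and membership of the inverse square root in `𝒜`
    (∀ t ∈ Set.Icc (0 : ℝ) (Real.pi / 2),
      (0 : B) ≤ 1 + (Real.sin t * Real.cos t) • P ∧
      IsUnit (1 + (Real.sin t * Real.cos t) • P) ∧
      cfc (fun x : ℝ => (Real.sqrt x)⁻¹) (1 + (Real.sin t * Real.cos t) • P) ∈ 𝒜) ∧
    -- (ii) the path lies in `𝒜` and is self-adjoint and involutive modulo `J`
    (∀ t ∈ Set.Icc (0 : ℝ) (Real.pi / 2),
      G t ∈ 𝒜 ∧ G t - star (G t) ∈ J ∧ (G t) ^ 2 - 1 ∈ J) ∧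
    -- (iii) norm-continuity and endpoints
    ContinuousOn G (Set.Icc (0 : ℝ) (Real.pi / 2)) ∧
      G 0 = F ∧ G (Real.pi / 2) = F' := by
  -- basic J-closure helpers
  have hJsub' : ∀ x ∈ J, ∀ y ∈ J, x - y ∈ J := fun x hx y hy => by
    rw [sub_eq_add_neg]; exact hJadd _ hx _ (hJneg _ hy)
  have h1𝒜 : ∀ r : ℝ, r • (1 : B) ∈ 𝒜 := fun r => by
    rw [← Algebra.algebraMap_eq_smul_one, IsScalarTower.algebraMap_apply ℝ ℂ B]
    exact 𝒜.algebraMap_mem _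
  have hJsmul : ∀ (r : ℝ), ∀ x ∈ J, r • x ∈ J := by
    intro r x hx
    simpa [smul_mul_assoc] using hJmul_left _ (h1𝒜 r) x hx
  have h𝒜smul : ∀ (r : ℝ), ∀ x ∈ (𝒜 : Set B), r • x ∈ 𝒜 := by
    intro r x hx
    rw [← algebraMap_smul ℂ r x]
    exact 𝒜.smul_mem hx _
  -- spectrum bound
  have hspec : ∀ x ∈ spectrum ℝ P, lam ≤ x := by
    rw [← Algebra.algebraMap_eq_smul_one] at hPlower
    exact (algebraMap_le_iff_le_spectrum hPsa).mp hPlower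
  -- trig bounds
  have hs : ∀ t ∈ Set.Icc (0:ℝ) (Real.pi/2),
      0 ≤ Real.sin t * Real.cos t ∧ Real.sin t * Real.cos t ≤ 1/2 := by
    intro t ht
    obtain ⟨ht0, ht1⟩ := ht
    have h1 : 0 ≤ Real.sin t := Real.sin_nonneg_of_nonneg_of_le_pi ht0
      (ht1.trans (by linarith [Real.pi_pos]))
    have h2 : 0 ≤ Real.cos t := Real.cos_nonneg_of_mem_Icc ⟨by linarith [Real.pi_pos], ht1⟩
    exact ⟨by positivity, by nlinarith [sq_nonneg (Real.sin t - Real.cos t), Real.sin_sq_add_cos_sq t]⟩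
  -- positivity of 1 + s x on the spectrum
  have hpos : ∀ t ∈ Set.Icc (0:ℝ) (Real.pi/2), ∀ x ∈ spectrum ℝ P,
      0 < 1 + (Real.sin t * Real.cos t) * x := by
    intro t ht x hx
    obtain ⟨hs0, hs1⟩ := hs t ht
    rcases le_or_gt 0 x with hx0 | hx0
    · nlinarith
    · nlinarith [hspec x hx]
  -- rewrite 1 + s • P as a cfc
  have hXeq : ∀ t : ℝ, 1 + (Real.sin t * Real.cos t) • P
      = cfc (fun x : ℝ => 1 + (Real.sin t * Real.cos t) * x) P := by
    intro t
    rw [cfc_const_add 1 (fun x : ℝ => (Real.sin t * Real.cos t) * x) P (by fun_prop) hPsa,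
      cfc_const_mul_id (Real.sin t * Real.cos t) P hPsa, map_one]
  -- continuity of q t on the spectrum
  have hsqrtpos : ∀ t ∈ Set.Icc (0:ℝ) (Real.pi/2), ∀ x ∈ spectrum ℝ P,
      Real.sqrt (1 + (Real.sin t * Real.cos t) * x) ≠ 0 := fun t ht x hx =>
    Real.sqrt_ne_zero'.mpr (hpos t ht x hx)
  have hqcont : ∀ t ∈ Set.Icc (0:ℝ) (Real.pi/2),
      ContinuousOn (fun x : ℝ => (Real.sqrt (1 + (Real.sin t * Real.cos t) * x))⁻¹)
        (spectrum ℝ P) := by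
    intro t ht
    refine ContinuousOn.inv₀ (by fun_prop) (hsqrtpos t ht)
  -- the inverse square root as a cfc of P
  have hRt : ∀ t ∈ Set.Icc (0:ℝ) (Real.pi/2),
      cfc (fun x : ℝ => (Real.sqrt x)⁻¹) (1 + (Real.sin t * Real.cos t) • P)
        = cfc (fun x : ℝ => (Real.sqrt (1 + (Real.sin t * Real.cos t) * x))⁻¹) P := by
    intro t ht
    have hg : ContinuousOn (fun x : ℝ => (Real.sqrt x)⁻¹)
        ((fun x : ℝ => 1 + (Real.sin t * Real.cos t) * x) '' spectrum ℝ P) := by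
      refine ContinuousOn.inv₀ (Real.continuous_sqrt.continuousOn) ?_
      rintro y ⟨x, hx, rfl⟩
      exact Real.sqrt_ne_zero'.mpr (hpos t ht x hx)
    have hcomp := cfc_comp (R := ℝ) (fun x : ℝ => (Real.sqrt x)⁻¹)
      (fun x : ℝ => 1 + (Real.sin t * Real.cos t) * x) P hPsa hg (by fun_prop)
    rw [hXeq t, ← hcomp]
    rfl
  -- P commutes with F and F' modulo J
  have hPdef : P = F * F' + F' * F - K := by rw [hdecomp]; abel
  have hPF : P * F - F * P ∈ J := by
    have h : P * F - F * P = (F' * (F ^ 2 - 1) - (F ^ 2 - 1) * F') + (F * K - K * F) := by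
      rw [hPdef]; noncomm_ring
    rw [h]
    exact hJadd _ (hJsub' _ (hJmul_left F' hF'𝒜 _ hF2) _ (hJmul_right F' hF'𝒜 _ hF2)) _
      (hJsub' _ (hJmul_left F hF𝒜 _ hK) _ (hJmul_right F hF𝒜 _ hK))
  have hPF' : P * F' - F' * P ∈ J := by
    have h : P * F' - F' * P = (F * (F' ^ 2 - 1) - (F' ^ 2 - 1) * F) + (F' * K - K * F') := by
      rw [hPdef]; noncomm_ring
    rw [h]
    exact hJadd _ (hJsub' _ (hJmul_left F hF𝒜 _ hF'2) _ (hJmul_right F hF𝒜 _ hF'2)) _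
      (hJsub' _ (hJmul_left F' hF'𝒜 _ hK) _ (hJmul_right F' hF'𝒜 _ hK))
  -- the closed subalgebra of elements of 𝒜 commuting with F and F' modulo J
  set S : Subalgebra ℝ B :=
    { carrier := {b | b ∈ 𝒜 ∧ b * F - F * b ∈ J ∧ b * F' - F' * b ∈ J}
      mul_mem' := by
        rintro a b ⟨ha𝒜, haF, haF'⟩ ⟨hb𝒜, hbF, hbF'⟩
        refine ⟨mul_mem ha𝒜 hb𝒜, ?_, ?_⟩
        · have h : a * b * F - F * (a * b) = a * (b * F - F * b) + (a * F - F * a) * b := by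
            noncomm_ring
          rw [h]
          exact hJadd _ (hJmul_left a ha𝒜 _ hbF) _ (hJmul_right b hb𝒜 _ haF)
        · have h : a * b * F' - F' * (a * b) = a * (b * F' - F' * b) + (a * F' - F' * a) * b := by
            noncomm_ring
          rw [h]
          exact hJadd _ (hJmul_left a ha𝒜 _ hbF') _ (hJmul_right b hb𝒜 _ haF')
      one_mem' := ⟨one_mem 𝒜, by simpa using hJ0, by simpa using hJ0⟩
      add_mem' := by
        rintro a b ⟨ha𝒜, haF, haF'⟩ ⟨hb𝒜, hbF, hbF'⟩
        refine ⟨add_mem ha𝒜 hb𝒜, ?_, ?_⟩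
        · have h : (a + b) * F - F * (a + b) = (a * F - F * a) + (b * F - F * b) := by
            noncomm_ring
          rw [h]; exact hJadd _ haF _ hbF
        · have h : (a + b) * F' - F' * (a + b) = (a * F' - F' * a) + (b * F' - F' * b) := by
            noncomm_ring
          rw [h]; exact hJadd _ haF' _ hbF'
      zero_mem' := ⟨zero_mem 𝒜, by simpa using hJ0, by simpa using hJ0⟩
      algebraMap_mem' := by
        intro r
        refine ⟨?_, ?_, ?_⟩
        · rw [IsScalarTower.algebraMap_apply ℝ ℂ B]
          exact 𝒜.algebraMap_mem _
        · rw [Algebra.commutes r F, sub_self]; exact hJ0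
        · rw [Algebra.commutes r F', sub_self]; exact hJ0 } with hSdef
  have hSclosed : IsClosed (S : Set B) := by
    have h : (S : Set B) = ((𝒜 : Set B) ∩ ((fun b => b * F - F * b) ⁻¹' J))
        ∩ ((fun b => b * F' - F' * b) ⁻¹' J) := by
      ext b
      constructor
      · rintro ⟨h1, h2, h3⟩; exact ⟨⟨h1, h2⟩, h3⟩
      · rintro ⟨⟨h1, h2⟩, h3⟩; exact ⟨h1, h2, h3⟩
    rw [h]
    exact (h𝒜.inter (hJclosed.preimage (by fun_prop))).inter (hJclosed.preimage (by fun_prop))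
  have hPS : P ∈ S := ⟨hP𝒜, hPF, hPF'⟩
  have hRS : ∀ t ∈ Set.Icc (0:ℝ) (Real.pi/2),
      cfc (fun x : ℝ => (Real.sqrt (1 + (Real.sin t * Real.cos t) * x))⁻¹) P ∈ S :=
    fun t ht => cfc_mem_closed_subalgebra S hSclosed P hPsa hPS _ (hqcont t ht)
  -- the fundamental identity R * R * X = 1
  have hRRX : ∀ t ∈ Set.Icc (0:ℝ) (Real.pi/2),
      cfc (fun x : ℝ => (Real.sqrt (1 + (Real.sin t * Real.cos t) * x))⁻¹) P
      * cfc (fun x : ℝ => (Real.sqrt (1 + (Real.sin t * Real.cos t) * x))⁻¹) P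
      * (1 + (Real.sin t * Real.cos t) • P) = 1 := by
    intro t ht
    rw [hXeq t, ← cfc_mul _ _ P (hqcont t ht) (hqcont t ht),
      ← cfc_mul _ _ P (show ContinuousOn (fun x : ℝ => (Real.sqrt (1 + (Real.sin t * Real.cos t) * x))⁻¹ * (Real.sqrt (1 + (Real.sin t * Real.cos t) * x))⁻¹) (spectrum ℝ P) from (hqcont t ht).mul (hqcont t ht)) (by fun_prop),
      ← cfc_one (R := ℝ) P hPsa]
    apply cfc_congr
    intro x hx
    have h0 := hpos t ht x hx
    have h1 := Real.mul_self_sqrt h0.le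
    have h2 := hsqrtpos t ht x hx
    field_simp
    rw [Pi.one_apply, mul_one, Real.sq_sqrt h0.le]
  have hXRR : ∀ t ∈ Set.Icc (0:ℝ) (Real.pi/2),
      (1 + (Real.sin t * Real.cos t) • P)
      * (cfc (fun x : ℝ => (Real.sqrt (1 + (Real.sin t * Real.cos t) * x))⁻¹) P
      * cfc (fun x : ℝ => (Real.sqrt (1 + (Real.sin t * Real.cos t) * x))⁻¹) P) = 1 := by
    intro t ht
    rw [hXeq t, ← cfc_mul _ _ P (hqcont t ht) (hqcont t ht),
      ← cfc_mul _ _ P (by fun_prop) (show ContinuousOn (fun x : ℝ => (Real.sqrt (1 + (Real.sin t * Real.cos t) * x))⁻¹ * (Real.sqrt (1 + (Real.sin t * Real.cos t) * x))⁻¹) (spectrum ℝ P) from (hqcont t ht).mul (hqcont t ht)),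
      ← cfc_one (R := ℝ) P hPsa]
    apply cfc_congr
    intro x hx
    have h0 := hpos t ht x hx
    have h1 := Real.mul_self_sqrt h0.le
    have h2 := hsqrtpos t ht x hx
    field_simp
    rw [Pi.one_apply, mul_one, Real.sq_sqrt h0.le]
  -- part (ii)
  have part2 : ∀ t ∈ Set.Icc (0:ℝ) (Real.pi/2),
      G t ∈ 𝒜 ∧ G t - star (G t) ∈ J ∧ (G t) ^ 2 - 1 ∈ J := by
    intro t ht
    have hRmem := hRS t ht
    have hRXone := hRRX t ht
    have hRt' := hRt t ht
    set R := cfc (fun x : ℝ => (Real.sqrt (1 + (Real.sin t * Real.cos t) * x))⁻¹) P with hRdef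
    obtain ⟨hR𝒜, hRF, hRF'⟩ := hRmem
    have hRsa : IsSelfAdjoint R := cfc_predicate _ P
    set V := Real.cos t • F + Real.sin t • F' with hVdef
    have hV𝒜 : V ∈ 𝒜 := add_mem (h𝒜smul _ F hF𝒜) (h𝒜smul _ F' hF'𝒜)
    have hGt : G t = R * V := by
      simp only [hG]
      rw [hRt', hVdef]
    have hRV : R * V - V * R ∈ J := by
      have h : R * V - V * R
          = Real.cos t • (R * F - F * R) + Real.sin t • (R * F' - F' * R) := by
        rw [hVdef]
        simp only [mul_add, add_mul, mul_smul_comm, smul_mul_assoc, smul_sub]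
        abel
      rw [h]
      exact hJadd _ (hJsmul _ _ hRF) _ (hJsmul _ _ hRF')
    have hVstarJ : V - star V ∈ J := by
      have h : V - star V = Real.cos t • (F - star F) + Real.sin t • (F' - star F') := by
        rw [hVdef]
        simp only [star_add, star_smul, star_trivial, smul_sub]
        abel
      rw [h]
      exact hJadd _ (hJsmul _ _ hFstar) _ (hJsmul _ _ hF'star)
    refine ⟨hGt ▸ mul_mem hR𝒜 hV𝒜, ?_, ?_⟩
    · have h : R * V - star (R * V) = (R * V - V * R) + (V - star V) * R := by
        rw [star_mul, hRsa.star_eq]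
        noncomm_ring
      rw [hGt, h]
      exact hJadd _ hRV _ (hJmul_right R hR𝒜 _ hVstarJ)
    · set E := Real.cos t ^ 2 • (F ^ 2 - 1) + Real.sin t ^ 2 • (F' ^ 2 - 1)
        + (Real.cos t * Real.sin t) • K with hEdef
      have hEJ : E ∈ J :=
        hJadd _ (hJadd _ (hJsmul _ _ hF2) _ (hJsmul _ _ hF'2)) _ (hJsmul _ _ hK)
      have hV2 : V * V = (1 + (Real.sin t * Real.cos t) • P) + E := by
        rw [hVdef, hEdef, hPdef]
        simp only [add_mul, mul_add, smul_mul_assoc, mul_smul_comm, smul_smul, smul_sub,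
          smul_add, pow_two, mul_one, one_mul]
        match_scalars <;> ring_nf <;> nlinarith [Real.sin_sq_add_cos_sq t]
      have hkey : (R * V) * (R * V) - 1 = R * R * E - R * (R * V - V * R) * V := by
        have hE' : E = V * V - (1 + (Real.sin t * Real.cos t) • P) := by rw [hV2]; abel
        rw [hE']
        have hexp : R * R * (V * V - (1 + (Real.sin t * Real.cos t) • P))
            - R * (R * V - V * R) * V
            = (R * V) * (R * V) - R * R * (1 + (Real.sin t * Real.cos t) • P) := by
          noncomm_ring
        rw [hexp, hRXone]
      have hpow : (G t) ^ 2 - 1 = R * R * E - R * (R * V - V * R) * V := by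
        rw [hGt, pow_two, hkey]
      rw [hpow]
      exact hJsub' _ (hJmul_left _ (mul_mem hR𝒜 hR𝒜) _ hEJ) _
        (hJmul_right _ hV𝒜 _ (hJmul_left _ hR𝒜 _ hRV))
  -- part (iii): continuity
  have part3 : ContinuousOn G (Set.Icc (0:ℝ) (Real.pi/2)) := by
    rw [continuousOn_iff_continuous_restrict]
    have hcontΦ : Continuous fun p : (Set.Icc (0:ℝ) (Real.pi/2)) × spectrum ℝ P =>
        (Real.sqrt (1 + (Real.sin (p.1 : ℝ) * Real.cos (p.1 : ℝ)) * (p.2 : ℝ)))⁻¹ := by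
      refine Continuous.inv₀ (by fun_prop) fun p => ?_
      exact hsqrtpos (p.1 : ℝ) p.1.2 (p.2 : ℝ) p.2.2
    set Φ : C((Set.Icc (0:ℝ) (Real.pi/2)) × spectrum ℝ P, ℝ) := ⟨_, hcontΦ⟩ with hΦdef
    have heq : (Set.Icc (0:ℝ) (Real.pi/2)).restrict G
        = fun τ : Set.Icc (0:ℝ) (Real.pi/2) => cfcHom hPsa (Φ.curry τ)
            * (Real.cos (τ : ℝ) • F + Real.sin (τ : ℝ) • F') := by
      funext τ
      show G (τ : ℝ) = _
      simp only [hG]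
      rw [hRt (τ : ℝ) τ.2]
      congr 1
      rw [cfc_apply (fun x : ℝ => (Real.sqrt (1 + (Real.sin (τ:ℝ) * Real.cos (τ:ℝ)) * x))⁻¹) P
        hPsa (hqcont (τ : ℝ) τ.2)]
      congr 1
    rw [show (Set.Icc (0:ℝ) (Real.pi/2)).domRestrict G = _ from heq]
    refine Continuous.mul ?_ (by fun_prop)
    exact (cfcHom_isClosedEmbedding hPsa).continuous.comp Φ.curry.continuous
  -- endpoints
  have hG0 : G 0 = F := by
    simp only [hG, Real.sin_zero, Real.cos_zero, zero_mul, zero_smul, add_zero, one_smul,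
      zero_smul, cfc_apply_one, Real.sqrt_one, inv_one, map_one, one_mul]
  have hGpi : G (Real.pi / 2) = F' := by
    simp only [hG, Real.sin_pi_div_two, Real.cos_pi_div_two, mul_zero, zero_smul, add_zero,
      one_smul, zero_add, cfc_apply_one, Real.sqrt_one, inv_one, map_one, one_mul]
  refine ⟨?_, part2, part3, hG0, hGpi⟩
  intro t ht
  refine ⟨?_, ?_, ?_⟩
  · rw [hXeq t]
    exact cfc_nonneg fun x hx => (hpos t ht x hx).le
  · exact ⟨⟨1 + (Real.sin t * Real.cos t) • P, _, hXRR t ht, hRRX t ht⟩, rfl⟩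
  · rw [hRt t ht]
    exact (hRS t ht).1
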